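/- Let k ≥ 2 be odd, let G_k be a 3-regular bipartite graph on 2k vertices with bipartition into independent sets A and B of size k, let H_k be as constructed, and let σ ∈ Res(G_k, H_k). Then for every vertex x of the mismatch graph G_k^σ − H_k: (1) if x ∉ {1, 2k−2}, then x is adjacent to exactly one other vertex of the same parity, that edge is negative, and x has degree 2, 4 or 6; (2) if x ∈ {1, 2k−2}, then x has degree 0, 2, 4 or 6 and all its neighbours in G_k^σ − H_k have parity opposite to that of x. -/

import Mathlib

open SimpleGraph

section MismatchDefs

variable {V W : Type*}

/-- The mismatch graph `G^π − H`: the symmetric difference of the image of `G` under the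
bijection `π` with `H`, as a graph on `V(H)`. Its edges are the positive edges
(edges of `G^π` not in `H`) together with the negative edges (edges of `H` not in `G^π`). -/
def mismatchGraph (G : SimpleGraph V) (H : SimpleGraph W) (π : V ≃ W) : SimpleGraph W :=
  symmDiff (G.map π.toEmbedding) H

/-- The degree of a vertex in the mismatch graph `G^π − H`. -/
noncomputable def mismatchDeg (G : SimpleGraph V) (H : SimpleGraph W) (π : V ≃ W) (x : W) : ℕ :=
  ((mismatchGraph G H π).neighborSet x).ncard

/-- The number of positive edges of `G^π − H` incident to `x`. -/
noncomputable def posDeg (G : SimpleGraph V) (H : SimpleGraph W) (π : V ≃ W) (x : W) : ℕ :=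
  ((G.map π.toEmbedding).neighborSet x \ H.neighborSet x).ncard

/-- The number of negative edges of `G^π − H` incident to `x`. -/
noncomputable def negDeg (G : SimpleGraph V) (H : SimpleGraph W) (π : V ≃ W) (x : W) : ℕ :=
  (H.neighborSet x \ (G.map π.toEmbedding).neighborSet x).ncard

/-- The maximum mismatch count `MMC(π)`: the maximum degree of the mismatch graph `G^π − H`. -/
noncomputable def MMC [Fintype W] (G : SimpleGraph V) (H : SimpleGraph W) (π : V ≃ W) : ℕ :=
  Finset.univ.sup (mismatchDeg G H π)

/-- The edit mismatch norm `μ_edit(G^π, H)`: the number of edges of the mismatch graph. -/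
noncomputable def muEdit (G : SimpleGraph V) (H : SimpleGraph W) (π : V ≃ W) : ℕ :=
  (mismatchGraph G H π).edgeSet.ncard

/-- The edit distance `δ_edit(G, H)`: the minimum of `μ_edit(G^π, H)` over all bijections. -/
noncomputable def deltaEdit (G : SimpleGraph V) (H : SimpleGraph W) : ℕ :=
  ⨅ π : V ≃ W, muEdit G H π

open Classical in
/-- The signed adjacency matrix of the mismatch graph `G^π − H`:
`+1` on positive edges, `−1` on negative edges, `0` otherwise. -/
noncomputable def signedAdj (G : SimpleGraph V) (H : SimpleGraph W) (π : V ≃ W) :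
    Matrix W W ℝ := fun x y =>
  if (G.map π.toEmbedding).Adj x y ∧ ¬ H.Adj x y then 1
  else if H.Adj x y ∧ ¬ (G.map π.toEmbedding).Adj x y then -1 else 0

/-- The `ℓ_p` norm of a vector over a finite index type. -/
noncomputable def lpNorm [Fintype W] (p : ℝ) (x : W → ℝ) : ℝ :=
  (∑ i, |x i| ^ p) ^ p⁻¹

/-- The `ℓ_p`-operator norm of a matrix: `sup_{x ≠ 0} ‖Mx‖_p / ‖x‖_p`. -/
noncomputable def lpOpNorm [Fintype W] (p : ℝ) (M : Matrix W W ℝ) : ℝ :=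
  ⨆ x : {x : W → ℝ // x ≠ 0}, lpNorm p (M.mulVec x.1) / lpNorm p x.1

end MismatchDefs

/-- The graph `H_k` on vertex set `{0, 1, …, 2k−1}`: the Hamiltonian cycle
`0 − 1 − ⋯ − (2k−1) − 0` together with, for even `k`, the chords `{i, i+2}` for
`i ≡ 0, 1 (mod 4)`, and for odd `k`, the chords `{i, i−2}` for `i ≡ 2 (mod 4)`,
`{i, i+2}` for `i ≡ 3 (mod 4)`, and `{2k−2, 1}`. -/
def Hk (k : ℕ) : SimpleGraph (Fin (2 * k)) :=
  SimpleGraph.fromRel (fun a b =>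
    (b.val = a.val + 1) ∨ (a.val = 2 * k - 1 ∧ b.val = 0) ∨
    (if k % 2 = 0 then
      (a.val % 4 = 0 ∨ a.val % 4 = 1) ∧ b.val = a.val + 2
    else
      (a.val % 4 = 2 ∧ b.val = a.val - 2) ∨ (a.val % 4 = 3 ∧ b.val = a.val + 2) ∨
        (a.val = 2 * k - 2 ∧ b.val = 1)))

/-- Attach `5` new pendant leaves to every vertex satisfying `P` and `12` new pendant
leaves to every other vertex. The leaves of `v` are `Sum.inr ⟨v, i⟩`. -/
def hatGraph {V : Type*} (G : SimpleGraph V) (P : V → Prop) [DecidablePred P] :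
    SimpleGraph (V ⊕ Σ v : V, Fin (if P v then 5 else 12)) :=
  SimpleGraph.fromRel (fun a b =>
    match a, b with
    | Sum.inl u, Sum.inl v => G.Adj u v
    | Sum.inl u, Sum.inr x => u = x.1
    | _, _ => False)

/-- `σ ∈ Res(G_k, H_k)`: the bijection `σ` maps the independent set `A` onto the even
vertices `Even(2k)` (and hence its complement `B` onto the odd vertices `Odd(2k)`). -/
def InRes {V : Type*} (k : ℕ) (A : Finset V) (σ : V ≃ Fin (2 * k)) : Prop :=
  ∀ v, v ∈ A ↔ (σ v).val % 2 = 0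

/-- Let `k ≥ 2` be odd, `G` a 3-regular bipartite graph on `2k` vertices
with bipartition into independent sets `A, B` of size `k`, and `σ ∈ Res(G, H_k)`. In the
mismatch graph `G^σ − H_k`: (1) every vertex `x ∉ {1, 2k−2}` is adjacent to exactly one
other vertex of the same parity, any such same-parity edge is negative, and `x` has degree
`2`, `4` or `6`; (2) every vertex `x ∈ {1, 2k−2}` has degree `0`, `2`, `4` or `6` and all
its neighbours have parity opposite to that of `x`. -/
def Rk (k a b : ℕ) : Prop :=
  (b = a + 1) ∨ (a = 2 * k - 1 ∧ b = 0) ∨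
    ((a % 4 = 2 ∧ b = a - 2) ∨ (a % 4 = 3 ∧ b = a + 2) ∨ (a = 2 * k - 2 ∧ b = 1))

lemma RkA1 {k a b : ℕ} (h : b = a + 1) : Rk k a b := Or.inl h
lemma RkA2 {k a b : ℕ} (h1 : a = 2 * k - 1) (h2 : b = 0) : Rk k a b := Or.inr (Or.inl ⟨h1, h2⟩)
lemma RkA3 {k a b : ℕ} (h1 : a % 4 = 2) (h2 : b = a - 2) : Rk k a b :=
  Or.inr (Or.inr (Or.inl ⟨h1, h2⟩))
lemma RkA4 {k a b : ℕ} (h1 : a % 4 = 3) (h2 : b = a + 2) : Rk k a b :=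
  Or.inr (Or.inr (Or.inr (Or.inl ⟨h1, h2⟩)))
lemma RkA5 {k a b : ℕ} (h1 : a = 2 * k - 2) (h2 : b = 1) : Rk k a b :=
  Or.inr (Or.inr (Or.inr (Or.inr ⟨h1, h2⟩)))

set_option maxHeartbeats 1000000 in
lemma keyHk (k x : ℕ) (hk : 3 ≤ k) (hko : k % 2 = 1) (hx : x < 2 * k) :
    ∃ p q c : ℕ,
    (p < 2 * k ∧ q < 2 * k ∧ c < 2 * k ∧ p ≠ q ∧ p ≠ c ∧ q ≠ c ∧
      p ≠ x ∧ q ≠ x ∧ c ≠ x ∧ p % 2 ≠ x % 2 ∧ q % 2 ≠ x % 2 ∧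
      (x ≠ 1 → x ≠ 2 * k - 2 → c % 2 = x % 2) ∧
      ((x = 1 ∨ x = 2 * k - 2) → c % 2 ≠ x % 2)) ∧
    ∀ y, y < 2 * k → ((x ≠ y ∧ (Rk k x y ∨ Rk k y x)) ↔ (y = p ∨ y = q ∨ y = c)) := by
  have fwd : ∀ p q c : ℕ, (∀ y, y < 2 * k → x ≠ y →
        ((y = x + 1 → (y = p ∨ y = q ∨ y = c)) ∧
         (x = 2 * k - 1 → y = 0 → (y = p ∨ y = q ∨ y = c)) ∧
         (x % 4 = 2 → y = x - 2 → (y = p ∨ y = q ∨ y = c)) ∧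
         (x % 4 = 3 → y = x + 2 → (y = p ∨ y = q ∨ y = c)) ∧
         (x = 2 * k - 2 → y = 1 → (y = p ∨ y = q ∨ y = c)) ∧
         (x = y + 1 → (y = p ∨ y = q ∨ y = c)) ∧
         (y = 2 * k - 1 → x = 0 → (y = p ∨ y = q ∨ y = c)) ∧
         (y % 4 = 2 → x = y - 2 → (y = p ∨ y = q ∨ y = c)) ∧
         (y % 4 = 3 → x = y + 2 → (y = p ∨ y = q ∨ y = c)) ∧
         (y = 2 * k - 2 → x = 1 → (y = p ∨ y = q ∨ y = c)))) →
      ∀ y, y < 2 * k → (x ≠ y ∧ (Rk k x y ∨ Rk k y x)) → (y = p ∨ y = q ∨ y = c) := by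
    intro p q c hall y hy ⟨hne, hr⟩
    obtain ⟨f1, f2, f3, f4, f5, f6, f7, f8, f9, f10⟩ := hall y hy hne
    rcases hr with (h|⟨h1,h2⟩|(⟨h1,h2⟩|⟨h1,h2⟩|⟨h1,h2⟩))|(h|⟨h1,h2⟩|(⟨h1,h2⟩|⟨h1,h2⟩|⟨h1,h2⟩))
    · exact f1 h
    · exact f2 h1 h2
    · exact f3 h1 h2
    · exact f4 h1 h2
    · exact f5 h1 h2
    · exact f6 h
    · exact f7 h1 h2
    · exact f8 h1 h2
    · exact f9 h1 h2
    · exact f10 h1 h2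
  by_cases e1 : x = 0
  · subst e1
    refine ⟨2*k-1, 1, 2, by omega, fun y hy => ⟨fwd _ _ _ (fun y hy hne => by omega) y hy, ?_⟩⟩
    rintro (rfl|rfl|rfl)
    · exact ⟨by omega, Or.inr (RkA2 rfl rfl)⟩
    · exact ⟨by omega, Or.inl (RkA1 rfl)⟩
    · exact ⟨by omega, Or.inr (RkA3 (by omega) (by omega))⟩
  by_cases e2 : x = 1
  · subst e2
    refine ⟨0, 2, 2*k-2, by omega, fun y hy => ⟨fwd _ _ _ (fun y hy hne => by omega) y hy, ?_⟩⟩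
    rintro (rfl|rfl|rfl)
    · exact ⟨by omega, Or.inr (RkA1 (by omega))⟩
    · exact ⟨by omega, Or.inl (RkA1 rfl)⟩
    · exact ⟨by omega, Or.inr (RkA5 rfl rfl)⟩
  by_cases e3 : x = 2*k-1
  · subst e3
    refine ⟨2*k-2, 0, 2*k-3, by omega, fun y hy => ⟨fwd _ _ _ (fun y hy hne => by omega) y hy, ?_⟩⟩
    rintro (rfl|rfl|rfl)
    · exact ⟨by omega, Or.inr (RkA1 (by omega))⟩
    · exact ⟨by omega, Or.inl (RkA2 rfl rfl)⟩
    · exact ⟨by omega, Or.inr (RkA4 (by omega) (by omega))⟩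
  by_cases e4 : x = 2*k-2
  · refine ⟨2*k-3, 2*k-1, 1, by omega, fun y hy => ⟨fwd _ _ _ (fun y hy hne => by omega) y hy, ?_⟩⟩
    rintro (rfl|rfl|rfl)
    · exact ⟨by omega, Or.inr (RkA1 (by omega))⟩
    · exact ⟨by omega, Or.inl (RkA1 (by omega))⟩
    · exact ⟨by omega, Or.inl (RkA5 e4 rfl)⟩
  rcases (show x%4=0 ∨ x%4=1 ∨ x%4=2 ∨ x%4=3 by omega) with h|h|h|h
  · refine ⟨x-1, x+1, x+2, by omega, fun y hy => ⟨fwd _ _ _ (fun y hy hne => by omega) y hy, ?_⟩⟩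
    rintro (rfl|rfl|rfl)
    · exact ⟨by omega, Or.inr (RkA1 (by omega))⟩
    · exact ⟨by omega, Or.inl (RkA1 rfl)⟩
    · exact ⟨by omega, Or.inr (RkA3 (by omega) (by omega))⟩
  · refine ⟨x-1, x+1, x-2, by omega, fun y hy => ⟨fwd _ _ _ (fun y hy hne => by omega) y hy, ?_⟩⟩
    rintro (rfl|rfl|rfl)
    · exact ⟨by omega, Or.inr (RkA1 (by omega))⟩
    · exact ⟨by omega, Or.inl (RkA1 rfl)⟩
    · exact ⟨by omega, Or.inr (RkA4 (by omega) (by omega))⟩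
  · refine ⟨x-1, x+1, x-2, by omega, fun y hy => ⟨fwd _ _ _ (fun y hy hne => by omega) y hy, ?_⟩⟩
    rintro (rfl|rfl|rfl)
    · exact ⟨by omega, Or.inr (RkA1 (by omega))⟩
    · exact ⟨by omega, Or.inl (RkA1 rfl)⟩
    · exact ⟨by omega, Or.inl (RkA3 h rfl)⟩
  · refine ⟨x-1, x+1, x+2, by omega, fun y hy => ⟨fwd _ _ _ (fun y hy hne => by omega) y hy, ?_⟩⟩
    rintro (rfl|rfl|rfl)
    · exact ⟨by omega, Or.inr (RkA1 (by omega))⟩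
    · exact ⟨by omega, Or.inl (RkA1 rfl)⟩
    · exact ⟨by omega, Or.inl (RkA4 h rfl)⟩

theorem statement_11 {V : Type*} [Fintype V] [DecidableEq V] (k : ℕ) (hk : 2 ≤ k)
    (hkOdd : Odd k)
    (G : SimpleGraph V) [DecidableRel G.Adj] (A B : Finset V)
    (hcard : Fintype.card V = 2 * k) (hA : A.card = k) (hB : B.card = k)
    (hUnion : ∀ v, v ∈ A ∨ v ∈ B) (hDisj : Disjoint A B)
    (hreg : G.IsRegularOfDegree 3)
    (hAind : ∀ u ∈ A, ∀ v ∈ A, ¬ G.Adj u v) (hBind : ∀ u ∈ B, ∀ v ∈ B, ¬ G.Adj u v)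
    (σ : V ≃ Fin (2 * k)) (hσ : InRes k A σ) :
    ∀ x : Fin (2 * k),
      (x.val ≠ 1 → x.val ≠ 2 * k - 2 →
        (∃! y : Fin (2 * k), (mismatchGraph G (Hk k) σ).Adj x y ∧ y.val % 2 = x.val % 2) ∧
        (∀ y : Fin (2 * k), (mismatchGraph G (Hk k) σ).Adj x y → y.val % 2 = x.val % 2 →
          (Hk k).Adj x y ∧ ¬ (G.map σ.toEmbedding).Adj x y) ∧
        (mismatchDeg G (Hk k) σ x = 2 ∨ mismatchDeg G (Hk k) σ x = 4 ∨
          mismatchDeg G (Hk k) σ x = 6)) ∧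
      (x.val = 1 ∨ x.val = 2 * k - 2 →
        (mismatchDeg G (Hk k) σ x = 0 ∨ mismatchDeg G (Hk k) σ x = 2 ∨
          mismatchDeg G (Hk k) σ x = 4 ∨ mismatchDeg G (Hk k) σ x = 6) ∧
        (∀ y : Fin (2 * k), (mismatchGraph G (Hk k) σ).Adj x y → y.val % 2 ≠ x.val % 2)) := by
  classical
  have hk1 : k % 2 = 1 := Nat.odd_iff.mp hkOdd
  have hk3 : 3 ≤ k := by omega
  -- adjacency of the mapped graph
  have hmap : ∀ a b : Fin (2 * k),
      (G.map σ.toEmbedding).Adj a b ↔ G.Adj (σ.symm a) (σ.symm b) := by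
    intro a b
    rw [SimpleGraph.map_adj]
    constructor
    · rintro ⟨u, v, h, rfl, rfl⟩
      simpa using h
    · intro h
      exact ⟨σ.symm a, σ.symm b, h, by simp, by simp⟩
  -- parity of mapped-graph edges
  have hSpar : ∀ a b : Fin (2 * k), (G.map σ.toEmbedding).Adj a b → b.val % 2 ≠ a.val % 2 := by
    intro a b hadj
    rw [hmap] at hadj
    have ha := hσ (σ.symm a)
    have hb := hσ (σ.symm b)
    simp only [Equiv.apply_symm_apply] at ha hb
    by_cases hA1 : σ.symm a ∈ A
    · have hbA : σ.symm b ∉ A := fun h => hAind _ hA1 _ h hadj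
      have h2 : a.val % 2 = 0 := ha.mp hA1
      have h3 : ¬ b.val % 2 = 0 := fun h => hbA (hb.mpr h)
      omega
    · have haB : σ.symm a ∈ B := (hUnion _).resolve_left hA1
      have hbB : σ.symm b ∉ B := fun h => hBind _ haB _ h hadj
      have hbA : σ.symm b ∈ A := (hUnion _).resolve_right hbB
      have h2 : b.val % 2 = 0 := hb.mp hbA
      have h3 : ¬ a.val % 2 = 0 := fun h => hA1 (ha.mpr h)
      omega
  -- degree of mapped graph
  have hScard : ∀ a : Fin (2 * k), ((G.map σ.toEmbedding).neighborSet a).ncard = 3 := by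
    intro a
    have himg : (G.map σ.toEmbedding).neighborSet a = σ '' G.neighborSet (σ.symm a) := by
      ext b
      simp only [SimpleGraph.mem_neighborSet, hmap, Set.mem_image]
      constructor
      · intro h
        exact ⟨σ.symm b, h, by simp⟩
      · rintro ⟨v, hv, rfl⟩
        simpa using hv
    rw [himg, Set.ncard_image_of_injective _ σ.injective, Set.ncard_eq_toFinset_card']
    have := hreg (σ.symm a)
    simpa [SimpleGraph.degree, SimpleGraph.neighborFinset] using this
  -- symmDiff adjacency
  have hsd : ∀ a b : Fin (2 * k), (mismatchGraph G (Hk k) σ).Adj a b ↔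
      ((G.map σ.toEmbedding).Adj a b ∧ ¬ (Hk k).Adj a b) ∨
        ((Hk k).Adj a b ∧ ¬ (G.map σ.toEmbedding).Adj a b) := by
    intro a b
    simp only [mismatchGraph, symmDiff_def, SimpleGraph.sup_adj, SimpleGraph.sdiff_adj]
  -- Hk adjacency
  have hHadj : ∀ a b : Fin (2 * k),
      (Hk k).Adj a b ↔ (a.val ≠ b.val ∧ (Rk k a.val b.val ∨ Rk k b.val a.val)) := by
    intro a b
    rw [Hk, SimpleGraph.fromRel_adj]
    have h2 : ¬ k % 2 = 0 := by omega
    simp only [if_neg h2, Rk, ne_eq, ← Fin.val_eq_val]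
  intro x
  obtain ⟨p, q, c, ⟨hp, hq, hc, hpq, hpc, hqc, hpx, hqx, hcx, hppar, hqpar, hcpar1, hcpar2⟩,
    hiff⟩ := keyHk k x.val hk3 hk1 x.isLt
  set P : Fin (2 * k) := ⟨p, hp⟩ with hPdef
  set Q : Fin (2 * k) := ⟨q, hq⟩ with hQdef
  set C : Fin (2 * k) := ⟨c, hc⟩ with hCdef
  have hT : (Hk k).neighborSet x = {P, Q, C} := by
    ext y
    simp only [SimpleGraph.mem_neighborSet, hHadj, Set.mem_insert_iff, Set.mem_singleton_iff,
      Fin.ext_iff]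
    exact hiff y.val y.isLt
  set S := (G.map σ.toEmbedding).neighborSet x with hSdef
  set T := (Hk k).neighborSet x with hTdef
  have hTcard : T.ncard = 3 := by
    rw [hT]
    refine Set.ncard_eq_three.mpr ⟨P, Q, C, ?_, ?_, ?_, rfl⟩
    · exact fun h => hpq (congrArg Fin.val h)
    · exact fun h => hpc (congrArg Fin.val h)
    · exact fun h => hqc (congrArg Fin.val h)
  have hD : (mismatchGraph G (Hk k) σ).neighborSet x = (S \ T) ∪ (T \ S) := by
    ext y
    simp only [SimpleGraph.mem_neighborSet, hsd x y, Set.mem_union, Set.mem_diff, hSdef, hTdef,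
      SimpleGraph.mem_neighborSet]
  have hSfin : S.Finite := Set.toFinite _
  have hTfin : T.Finite := Set.toFinite _
  have h1 : (S ∩ T).ncard + (S \ T).ncard = 3 := by
    rw [Set.ncard_inter_add_ncard_diff_eq_ncard S T hSfin]
    exact hScard x
  have h2 : (T ∩ S).ncard + (T \ S).ncard = 3 := by
    rw [Set.ncard_inter_add_ncard_diff_eq_ncard T S hTfin]
    exact hTcard
  have hST : (T ∩ S).ncard = (S ∩ T).ncard := by rw [Set.inter_comm]
  have hdeg : mismatchDeg G (Hk k) σ x = (S \ T).ncard + (T \ S).ncard := by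
    rw [mismatchDeg, hD, Set.ncard_union_eq disjoint_sdiff_sdiff hSfin.diff hTfin.diff]
  -- membership facts
  have hPmem : P ∈ T := by rw [hT]; simp
  have hQmem : Q ∈ T := by rw [hT]; simp
  have hCmem : C ∈ T := by rw [hT]; simp
  constructor
  · intro hx1 hx2
    have hcsame : c % 2 = x.val % 2 := hcpar1 hx1 hx2
    have hCnotS : C ∉ S := by
      intro h
      exact hSpar x C h hcsame
    have hCTS : C ∈ T \ S := ⟨hCmem, hCnotS⟩
    have hCadj : (mismatchGraph G (Hk k) σ).Adj x C := by
      rw [hsd]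
      exact Or.inr ⟨hCmem, hCnotS⟩
    refine ⟨⟨C, ⟨hCadj, hcsame⟩, ?_⟩, ?_, ?_⟩
    · rintro y ⟨hyadj, hypar⟩
      have hynotS : y ∉ S := fun h => hSpar x y h hypar
      have hyT : y ∈ T := by
        rcases (hsd x y).mp hyadj with ⟨h, _⟩ | ⟨h, _⟩
        · exact absurd h hynotS
        · exact h
      rw [hT] at hyT
      rcases hyT with rfl | rfl | rfl
      · exact absurd hypar hppar
      · exact absurd hypar hqpar
      · rfl
    · intro y hyadj hypar
      have hynotS : ¬ (G.map σ.toEmbedding).Adj x y := fun h => hSpar x y h hypar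
      rcases (hsd x y).mp hyadj with ⟨h, _⟩ | ⟨h, _⟩
      · exact absurd h hynotS
      · exact ⟨h, hynotS⟩
    · have hTSpos : 1 ≤ (T \ S).ncard := by
        have : (T \ S).Nonempty := ⟨C, hCTS⟩
        have := (Set.ncard_pos hTfin.diff).mpr this
        omega
      omega
  · intro hx12
    constructor
    · omega
    · intro y hyadj
      rcases (hsd x y).mp hyadj with ⟨h, _⟩ | ⟨h, _⟩
      · exact hSpar x y h
      · have hyT : y ∈ T := h
        rw [hT] at hyT
        rcases hyT with rfl | rfl | rfl
        · exact hppar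
        · exact hqpar
        · exact hcpar2 hx12
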